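/- For every simple mixed graph G on n ≥ 1 vertices, ν_{2n−1}(G) ≤ (4·e(G) + 2·a(G)) / (2n − 1) ≤ ν₁(G). -/

import Mathlib

set_option linter.unusedSectionVars false

open Matrix Finset Polynomial

variable {V : Type*} [Fintype V] [DecidableEq V]

/-- Undirected adjacency matrix of the mixed graph with edge-multiplicity function `E`:
`(u,v)`-entry `E u v` for `u ≠ v`, and `(v,v)`-entry `2 * E v v`. -/
def Au (E : V → V → ℕ) : Matrix V V ℝ :=
  Matrix.of fun u v => if u = v then ((2 * E v v : ℕ) : ℝ) else ((E u v : ℕ) : ℝ)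

/-- Arc matrix of the mixed graph with arc-multiplicity function `A`. -/
def Bm (A : V → V → ℕ) : Matrix V V ℝ := Matrix.of fun u v => ((A u v : ℕ) : ℝ)

/-- Undirected degree `d v`. -/
def dU (E : V → V → ℕ) (v : V) : ℕ :=
  (∑ u ∈ Finset.univ.filter (fun u => u ≠ v), E v u) + 2 * E v v

/-- Out-degree `d⁺ v`. -/
def dOut (A : V → V → ℕ) (v : V) : ℕ := ∑ u, A v u

/-- In-degree `d⁻ v`. -/
def dIn (A : V → V → ℕ) (v : V) : ℕ := ∑ u, A u v

/-- Integrated adjacency matrix `𝓘(G) = [[Aᵤ, B], [Bᵀ, Aᵤ]]`. -/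
def intAdj (E A : V → V → ℕ) : Matrix (V ⊕ V) (V ⊕ V) ℝ :=
  Matrix.fromBlocks (Au E) (Bm A) (Bm A)ᵀ (Au E)

/-- Integrated degree matrix `𝓘ᴰ(G)`. -/
def intDeg (E A : V → V → ℕ) : Matrix (V ⊕ V) (V ⊕ V) ℝ :=
  Matrix.diagonal (Sum.elim (fun v => ((dU E v + dOut A v : ℕ) : ℝ))
    (fun v => ((dU E v + dIn A v : ℕ) : ℝ)))

/-- Integrated Laplacian matrix `𝓘ᴸ(G) = 𝓘ᴰ(G) - 𝓘(G)`. -/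
def intLap (E A : V → V → ℕ) : Matrix (V ⊕ V) (V ⊕ V) ℝ := intDeg E A - intAdj E A

/-- Integrated signless Laplacian matrix `𝓘Q(G) = 𝓘ᴰ(G) + 𝓘(G)`. -/
def intQ (E A : V → V → ℕ) : Matrix (V ⊕ V) (V ⊕ V) ℝ := intDeg E A + intAdj E A

/-- A mixed graph is simple: multiplicities at most 1, no loops, no directed loops. -/
def IsSimple (E A : V → V → ℕ) : Prop :=
  (∀ u v, E u v ≤ 1) ∧ (∀ u v, A u v ≤ 1) ∧ (∀ v, E v v = 0) ∧ (∀ v, A v v = 0)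

/-- Number of edges (excluding loops): `e(G) = (1/2)·Σ_{u ≠ v} E u v`. -/
noncomputable def numEdges (E : V → V → ℕ) : ℝ :=
  (∑ u, ∑ v ∈ Finset.univ.filter (fun v => v ≠ u), (E u v : ℝ)) / 2

/-- Number of loops: `l(G) = Σ_v E v v`. -/
noncomputable def numLoops (E : V → V → ℕ) : ℝ := ∑ v, (E v v : ℝ)

/-- Number of arcs (including directed loops): `a(G) = Σ_{u,v} A u v`. -/
noncomputable def numArcs (A : V → V → ℕ) : ℝ := ∑ u, ∑ v, (A u v : ℝ)

lemma intAdj_isHermitian (E A : V → V → ℕ) (hE : ∀ u v, E u v = E v u) :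
    (intAdj E A).IsHermitian := by
  have hAu : (Au E)ᵀ = Au E := by
    ext u v
    by_cases h : u = v
    · subst h; rfl
    · simp [Au, Matrix.transpose_apply, h, Ne.symm h, hE u v]
  show (intAdj E A)ᴴ = intAdj E A
  rw [Matrix.conjTranspose_eq_transpose_of_trivial]
  unfold intAdj
  rw [Matrix.fromBlocks_transpose, hAu, Matrix.transpose_transpose]

lemma intLap_isHermitian (E A : V → V → ℕ) (hE : ∀ u v, E u v = E v u) :
    (intLap E A).IsHermitian :=
  (Matrix.isHermitian_diagonal _).sub (intAdj_isHermitian E A hE)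

lemma intQ_isHermitian (E A : V → V → ℕ) (hE : ∀ u v, E u v = E v u) :
    (intQ E A).IsHermitian :=
  (Matrix.isHermitian_diagonal _).add (intAdj_isHermitian E A hE)

/-- The non-increasing rearrangement of a finite tuple of reals. -/
noncomputable def sortDesc {N : ℕ} (f : Fin N → ℝ) : Fin N → ℝ :=
  fun i => (f ∘ Tuple.sort f) i.rev

/-- The eigenvalues of the integrated Laplacian matrix `𝓘ᴸ(G)`, in non-increasing order:
`nuT E A hE i` is `ν_{i+1}(G)` (0-indexed). -/
noncomputable def nuT {n : ℕ} (E A : Fin n → Fin n → ℕ) (hE : ∀ u v, E u v = E v u) :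
    Fin (n + n) → ℝ :=
  sortDesc (fun i => (intLap_isHermitian E A hE).eigenvalues (finSumFinEquiv.symm i))

/-- The eigenvalues of the integrated signless Laplacian matrix `𝓘Q(G)`, in non-increasing
order: `xiT E A hE i` is `ξ_{i+1}(G)` (0-indexed). -/
noncomputable def xiT {n : ℕ} (E A : Fin n → Fin n → ℕ) (hE : ∀ u v, E u v = E v u) :
    Fin (n + n) → ℝ :=
  sortDesc (fun i => (intQ_isHermitian E A hE).eigenvalues (finSumFinEquiv.symm i))

/-- The eigenvalues of the integrated adjacency matrix `𝓘(G)`, in non-increasing order: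
`lamT E A hE i` is `λ_{i+1}(G)` (0-indexed). -/
noncomputable def lamT {n : ℕ} (E A : Fin n → Fin n → ℕ) (hE : ∀ u v, E u v = E v u) :
    Fin (n + n) → ℝ :=
  sortDesc (fun i => (intAdj_isHermitian E A hE).eigenvalues (finSumFinEquiv.symm i))

section AuxLemmas

/-- `sortDesc` is antitone. -/
lemma sortDesc_antitone {N : ℕ} (f : Fin N → ℝ) : Antitone (sortDesc f) := by
  intro i j hij
  exact Tuple.monotone_sort f (Fin.rev_le_rev.mpr hij)

/-- The sum of `sortDesc f` equals the sum of `f`. -/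
lemma sortDesc_sum {N : ℕ} (f : Fin N → ℝ) : ∑ i, sortDesc f i = ∑ i, f i := by
  calc ∑ i, sortDesc f i = ∑ i, (f ∘ Tuple.sort f) (Fin.revPerm i) := rfl
    _ = ∑ i, (f ∘ Tuple.sort f) i := Equiv.sum_comp _ _
    _ = ∑ i, f ((Tuple.sort f) i) := rfl
    _ = ∑ i, f i := Equiv.sum_comp _ _

lemma sortDesc_surj {N : ℕ} (f : Fin N → ℝ) (j : Fin N) : ∃ i, sortDesc f i = f j :=
  ⟨((Tuple.sort f).symm j).rev, by simp [sortDesc, Fin.rev_rev]⟩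

lemma sortDesc_exists {N : ℕ} (f : Fin N → ℝ) (i : Fin N) : ∃ j, sortDesc f i = f j :=
  ⟨_, rfl⟩

/-- Trace of a real symmetric matrix equals the sum of its eigenvalues. -/
lemma trace_eq_sum_eig {m : Type*} [Fintype m] [DecidableEq m]
    {M : Matrix m m ℝ} (hM : M.IsHermitian) :
    M.trace = ∑ i, hM.eigenvalues i := by
  nth_rewrite 1 [hM.spectral_theorem]
  rw [Unitary.conjStarAlgAut_apply]
  rw [Matrix.trace_mul_comm, ← Matrix.mul_assoc,
    Matrix.mem_unitaryGroup_iff'.mp (Matrix.IsHermitian.eigenvectorUnitary hM).2,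
    Matrix.one_mul, Matrix.trace_diagonal]
  simp

/-- A symmetric matrix with nonnegative entries yields a positive semidefinite Laplacian. -/
lemma lap_posSemidef {m : Type*} [Fintype m] [DecidableEq m]
    (W : Matrix m m ℝ) (hsym : ∀ u v, W u v = W v u) (hnn : ∀ u v, 0 ≤ W u v) :
    (Matrix.diagonal (fun v => ∑ u, W v u) - W).PosSemidef := by
  rw [Matrix.posSemidef_iff_dotProduct_mulVec]
  constructor
  · have hW : W.IsHermitian := by
      ext u v
      simpa [Matrix.conjTranspose_apply] using hsym v u
    exact (Matrix.isHermitian_diagonal _).sub hW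
  · intro x
    have e1 : dotProduct (star x)
          ((Matrix.diagonal (fun v => ∑ u, W v u) - W) *ᵥ x)
        = ∑ v, ∑ u, (W v u * x v ^ 2 - W v u * x u * x v) := by
      rw [Matrix.sub_mulVec, dotProduct_sub]
      have hd : dotProduct (star x) (Matrix.diagonal (fun v => ∑ u, W v u) *ᵥ x)
          = ∑ v, ∑ u, W v u * x v ^ 2 := by
        simp only [star_trivial, dotProduct, Matrix.mulVec_diagonal]
        refine Finset.sum_congr rfl fun v _ => ?_
        rw [Finset.sum_mul, Finset.mul_sum]
        exact Finset.sum_congr rfl fun u _ => by ring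
      have hw : dotProduct (star x) (W *ᵥ x) = ∑ v, ∑ u, W v u * x u * x v := by
        simp only [star_trivial, dotProduct, Matrix.mulVec]
        refine Finset.sum_congr rfl fun v _ => ?_
        rw [Finset.mul_sum]
        exact Finset.sum_congr rfl fun u _ => by ring
      rw [hd, hw]
      simp [Finset.sum_sub_distrib]
    have hswap : ∑ v, ∑ u, (W v u * x u ^ 2 - W v u * x u * x v)
        = ∑ v, ∑ u, (W v u * x v ^ 2 - W v u * x u * x v) := by
      rw [Finset.sum_comm]
      refine Finset.sum_congr rfl fun v _ => Finset.sum_congr rfl fun u _ => ?_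
      rw [hsym u v]; ring
    have key : (2:ℝ) * ∑ v, ∑ u, (W v u * x v ^ 2 - W v u * x u * x v)
        = ∑ v, ∑ u, W v u * (x v - x u) ^ 2 := by
      rw [two_mul]
      nth_rewrite 2 [← hswap]
      rw [← Finset.sum_add_distrib]
      refine Finset.sum_congr rfl fun v _ => ?_
      rw [← Finset.sum_add_distrib]
      exact Finset.sum_congr rfl fun u _ => by ring
    have nn : 0 ≤ ∑ v, ∑ u, W v u * (x v - x u) ^ 2 :=
      Finset.sum_nonneg fun v _ => Finset.sum_nonneg fun u _ =>
        mul_nonneg (hnn v u) (sq_nonneg _)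
    rw [e1]
    nlinarith [key, nn]

lemma sum_Au_row (E : V → V → ℕ) (v : V) : ∑ u, Au E v u = ((dU E v : ℕ) : ℝ) := by
  rw [← Finset.add_sum_erase _ _ (Finset.mem_univ v)]
  have h1 : Au E v v = ((2 * E v v : ℕ) : ℝ) := by simp [Au]
  have h2 : ∑ u ∈ Finset.univ.erase v, Au E v u
      = ∑ u ∈ Finset.univ.erase v, ((E v u : ℕ) : ℝ) := by
    refine Finset.sum_congr rfl fun u hu => ?_
    have : v ≠ u := (Finset.ne_of_mem_erase hu).symm
    simp [Au, this]
  rw [h1, h2, dU]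
  push_cast
  rw [Finset.filter_ne']
  ring

/-- The integrated degree matrix is the diagonal of row sums of the integrated adjacency. -/
lemma intDeg_eq_rowSums (E A : V → V → ℕ) :
    intDeg E A = Matrix.diagonal (fun s => ∑ t, intAdj E A s t) := by
  have h : (Sum.elim (fun v => ((dU E v + dOut A v : ℕ) : ℝ))
      (fun v => ((dU E v + dIn A v : ℕ) : ℝ)))
      = fun s => ∑ t, intAdj E A s t := by
    funext s
    cases s with
    | inl v =>
      have h1 : ∑ t, intAdj E A (Sum.inl v) t = (∑ u, Au E v u) + ∑ u, Bm A v u := by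
        simp [intAdj, Fintype.sum_sum_type]
      rw [h1, sum_Au_row]
      simp only [Sum.elim_inl, Bm, Matrix.of_apply, dOut]
      push_cast
      ring
    | inr v =>
      have h1 : ∑ t, intAdj E A (Sum.inr v) t = (∑ u, Bm A u v) + ∑ u, Au E v u := by
        simp [intAdj, Fintype.sum_sum_type, Matrix.transpose_apply]
      rw [h1, sum_Au_row]
      simp only [Sum.elim_inr, Bm, Matrix.of_apply, dIn]
      push_cast
      ring
  rw [intDeg, h]

lemma intAdj_symm_apply (E A : V → V → ℕ) (hE : ∀ u v, E u v = E v u)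
    (s t : V ⊕ V) : intAdj E A s t = intAdj E A t s := by
  have h := intAdj_isHermitian E A hE
  have := congrFun (congrFun h t) s
  simpa [Matrix.conjTranspose_apply] using this

lemma intAdj_nonneg (E A : V → V → ℕ) (s t : V ⊕ V) : 0 ≤ intAdj E A s t := by
  rcases s with v | v <;> rcases t with u | u <;>
    simp [intAdj, Au, Bm, Matrix.transpose_apply] <;> split_ifs <;> positivity

lemma intLap_posSemidef (E A : V → V → ℕ) (hE : ∀ u v, E u v = E v u) :
    (intLap E A).PosSemidef := by
  rw [intLap, intDeg_eq_rowSums]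
  exact lap_posSemidef _ (intAdj_symm_apply E A hE) (intAdj_nonneg E A)

lemma intLap_mulVec_one (E A : V → V → ℕ) :
    intLap E A *ᵥ (fun _ => (1:ℝ)) = 0 := by
  rw [intLap, intDeg_eq_rowSums]
  ext s
  rw [Pi.zero_apply, Matrix.sub_mulVec, Pi.sub_apply, Matrix.mulVec_diagonal]
  simp [Matrix.mulVec, dotProduct]

lemma trace_intLap (E A : V → V → ℕ) (hEl : ∀ v, E v v = 0) :
    (intLap E A).trace = 4 * numEdges E + 2 * numArcs A := by
  have hAu : (Au E).trace = 0 := by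
    simp [Matrix.trace, Matrix.diag, Au, hEl]
  have h1 : ∑ v, ((dU E v : ℕ) : ℝ) = 2 * numEdges E := by
    unfold dU numEdges
    push_cast
    simp only [hEl, Nat.cast_zero, mul_zero, add_zero]
    ring
  have h2 : ∑ v, ((dOut A v : ℕ) : ℝ) = numArcs A := by
    unfold dOut numArcs; push_cast; rfl
  have h3 : ∑ v, ((dIn A v : ℕ) : ℝ) = numArcs A := by
    unfold dIn numArcs
    push_cast
    rw [Finset.sum_comm]
  rw [intLap, Matrix.trace_sub]
  rw [show (intAdj E A).trace = (Au E).trace + (Au E).trace from by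
    simp [intAdj, Matrix.trace, Matrix.diag, Fintype.sum_sum_type]]
  rw [hAu]
  rw [show (intDeg E A).trace
      = (∑ v, ((dU E v + dOut A v : ℕ) : ℝ)) + ∑ v, ((dU E v + dIn A v : ℕ) : ℝ) from by
    rw [intDeg, Matrix.trace_diagonal]
    simp [Fintype.sum_sum_type]]
  push_cast
  rw [Finset.sum_add_distrib, Finset.sum_add_distrib]
  push_cast at h1 h2 h3
  rw [h1, h2, h3]
  ring

end AuxLemmas

/-- for every simple mixed graph `G` on `n ≥ 1` vertices,
`ν_{2n−1}(G) ≤ (4e(G) + 2a(G))/(2n − 1) ≤ ν₁(G)`. -/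
theorem stmt7 (n : ℕ) (hn : 0 < n) (E A : Fin n → Fin n → ℕ)
    (hE : ∀ u v, E u v = E v u) (hS : IsSimple E A) :
    nuT E A hE ⟨n + n - 2, by omega⟩ ≤
        (4 * numEdges E + 2 * numArcs A) / (2 * (n : ℝ) - 1) ∧
      (4 * numEdges E + 2 * numArcs A) / (2 * (n : ℝ) - 1) ≤ nuT E A hE ⟨0, by omega⟩ := by
  obtain ⟨hE1, hA1, hEl, hAl⟩ := hS
  set S : ℝ := 4 * numEdges E + 2 * numArcs A with hSdef
  set g : Fin (n + n) → ℝ :=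
    fun i => (intLap_isHermitian E A hE).eigenvalues (finSumFinEquiv.symm i) with hg
  have hnu : nuT E A hE = sortDesc g := rfl
  have hsum : ∑ i, g i = S := by
    have h1 : ∑ i, g i = ∑ s, (intLap_isHermitian E A hE).eigenvalues s := by
      simp only [hg]
      exact Equiv.sum_comp finSumFinEquiv.symm _
    rw [h1, ← trace_eq_sum_eig, trace_intLap E A hEl]
  have hPSD := intLap_posSemidef E A hE
  have hgnn : ∀ i, 0 ≤ g i := fun i => hPSD.eigenvalues_nonneg _
  have hzero : ∃ i, g i = 0 := by
    have hdet : (intLap E A).det = 0 := by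
      rw [← Matrix.exists_mulVec_eq_zero_iff]
      refine ⟨fun _ => 1, ?_, intLap_mulVec_one E A⟩
      intro h
      have h2 := congrFun h (Sum.inl ⟨0, hn⟩)
      simp at h2
    rw [(intLap_isHermitian E A hE).det_eq_prod_eigenvalues] at hdet
    obtain ⟨s, _, hs⟩ := Finset.prod_eq_zero_iff.mp hdet
    refine ⟨finSumFinEquiv s, ?_⟩
    have hs' : (intLap_isHermitian E A hE).eigenvalues s = 0 := by exact_mod_cast hs
    simpa [hg] using hs'
  have hmono := sortDesc_antitone g
  have hNlt : n + n - 1 < n + n := by omega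
  set last : Fin (n + n) := ⟨n + n - 1, hNlt⟩ with hlastdef
  have hlast0 : sortDesc g last = 0 := by
    obtain ⟨j, hj⟩ := hzero
    obtain ⟨i, hi⟩ := sortDesc_surj g j
    have h1 : sortDesc g last ≤ 0 := by
      have hile : i ≤ last := by
        rw [Fin.le_def]
        have := i.2
        simp only [hlastdef]
        omega
      calc sortDesc g last ≤ sortDesc g i := hmono hile
        _ = 0 := hi.trans hj
    have h2 : 0 ≤ sortDesc g last := by
      obtain ⟨j2, hj2⟩ := sortDesc_exists g last
      rw [hj2]; exact hgnn j2
    linarith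
  have hsplit : ∑ i ∈ Finset.univ.erase last, sortDesc g i = S := by
    have h3 := Finset.add_sum_erase Finset.univ (sortDesc g) (Finset.mem_univ last)
    rw [sortDesc_sum, hsum, hlast0] at h3
    linarith
  have hcard : (Finset.univ.erase last).card = n + n - 1 := by
    rw [Finset.card_erase_of_mem (Finset.mem_univ _), Finset.card_univ, Fintype.card_fin]
  have hc : ((n + n - 1 : ℕ) : ℝ) = 2 * (n : ℝ) - 1 := by
    have h4 : (1 : ℕ) ≤ n + n := by omega
    push_cast [h4]
    ring
  have hpos : (0 : ℝ) < 2 * (n : ℝ) - 1 := by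
    have : (1 : ℝ) ≤ (n : ℝ) := by exact_mod_cast hn
    linarith
  constructor
  · have hle1 : ∀ i ∈ Finset.univ.erase last,
        sortDesc g ⟨n + n - 2, by omega⟩ ≤ sortDesc g i := by
      intro i hi
      apply hmono
      have hne := Finset.ne_of_mem_erase hi
      have hne' : i.1 ≠ n + n - 1 := fun h => hne (Fin.ext (by simpa [hlastdef] using h))
      rw [Fin.le_def]
      have := i.2
      simp only
      omega
    have hlow := Finset.card_nsmul_le_sum _ _ _ hle1
    rw [hcard, hsplit, nsmul_eq_mul, hc] at hlow
    rw [hnu, le_div_iff₀ hpos]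
    linarith
  · have hle2 : ∀ i ∈ Finset.univ.erase last,
        sortDesc g i ≤ sortDesc g ⟨0, by omega⟩ := by
      intro i _
      apply hmono
      rw [Fin.le_def]
      simp
    have hup := Finset.sum_le_card_nsmul _ _ _ hle2
    rw [hcard, hsplit, nsmul_eq_mul, hc] at hup
    rw [hnu, div_le_iff₀ hpos]
    linarith
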